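/- Fix an integer N ≥ 2. Define τ_1 = 0 and inductively let τ_j be the smallest integer t in absolute value (choosing the positive one in case of a tie) such that (t + N^j ℤ) is disjoint from ⋃_{i<j} (τ_i + N^i ℤ). Then ℤ is the disjoint union ⨆_{j∈ℕ} (τ_j + N^j ℤ). -/

import Mathlib

/-- The coset `t + N^j ℤ` as a subset of ℤ. -/
def coset (N : ℕ) (j : ℕ) (t : ℤ) : Set ℤ := {x : ℤ | (N : ℤ) ^ j ∣ x - t}

/-- `t` is an available representative at stage `j`: the coset `t + N^j ℤ` is disjoint
from all previously chosen cosets `τ i + N^i ℤ`, `1 ≤ i < j`. -/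
def Avail (N : ℕ) (τ : ℕ → ℤ) (j : ℕ) (t : ℤ) : Prop :=
  ∀ i, 1 ≤ i → i < j → Disjoint (coset N j t) (coset N i (τ i))

/-- The greedy rule: τ 1 = 0, and for j ≥ 2, τ j is an available representative of
smallest absolute value, chosen positive in case of a tie. -/
def IsGreedy (N : ℕ) (τ : ℕ → ℤ) : Prop :=
  τ 1 = 0 ∧ ∀ j, 2 ≤ j →
    Avail N τ j (τ j) ∧
    (∀ t : ℤ, Avail N τ j t → |τ j| ≤ |t|) ∧
    (∀ t : ℤ, Avail N τ j t → |t| = |τ j| → t = τ j ∨ 0 < τ j)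

lemma coset_self (N j : ℕ) (t : ℤ) : t ∈ coset N j t := by simp [coset]

lemma disjoint_of_not_mem (N i j : ℕ) (hij : i ≤ j) (s t : ℤ)
    (h : s ∉ coset N i t) : Disjoint (coset N j s) (coset N i t) := by
  rw [Set.disjoint_left]
  intro y hy1 hy2
  apply h
  simp only [coset, Set.mem_setOf_eq] at *
  have h1 : (N : ℤ) ^ i ∣ y - s := dvd_trans (pow_dvd_pow _ hij) hy1
  have h2 : (N : ℤ) ^ i ∣ (y - t) - (y - s) := dvd_sub hy2 h1
  have h3 : (y - t) - (y - s) = s - t := by ring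
  rwa [h3] at h2

/-- For N ≥ 2, the greedy cosets τ_j + N^j ℤ, j ≥ 1, form a partition of ℤ. -/
theorem stmt_6 (N : ℕ) (hN : 2 ≤ N) (τ : ℕ → ℤ) (hτ : IsGreedy N τ) :
    (∀ i j, 1 ≤ i → 1 ≤ j → i ≠ j →
      Disjoint (coset N i (τ i)) (coset N j (τ j))) ∧
    (⋃ (j : ℕ) (_ : 1 ≤ j), coset N j (τ j)) = Set.univ := by
  obtain ⟨hτ1, hτ2⟩ := hτ
  have key : ∀ i j, 1 ≤ i → i < j → Disjoint (coset N j (τ j)) (coset N i (τ i)) := by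
    intro i j hi hij
    have hj : 2 ≤ j := by omega
    exact (hτ2 j hj).1 i hi hij
  constructor
  · intro i j hi hj hne
    rcases lt_or_gt_of_ne hne with h | h
    · exact (key i j hi h).symm
    · exact key j i hj h
  · ext x
    simp only [Set.mem_iUnion, Set.mem_univ, iff_true]
    by_contra hx
    push_neg at hx
    have havail : ∀ j, 2 ≤ j → Avail N τ j x := by
      intro j hj i hi hij
      exact disjoint_of_not_mem N i j (le_of_lt hij) x (τ i) (hx i hi)
    have hbound : ∀ j, 2 ≤ j → |τ j| ≤ |x| := fun j hj =>
      (hτ2 j hj).2.1 x (havail j hj)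
    have hinj : ∀ j k, 2 ≤ j → j < k → τ j ≠ τ k := by
      intro j k hj hjk heq
      have hd := key j k (by omega) hjk
      have h1 : τ k ∈ coset N k (τ k) := coset_self N k (τ k)
      have h2 : τ k ∈ coset N j (τ j) := heq ▸ coset_self N j (τ k)
      exact Set.disjoint_left.mp hd h1 h2
    -- counting argument
    set B : ℤ := |x| with hB
    have hB0 : 0 ≤ B := abs_nonneg x
    have hcard := Finset.card_le_card_of_injOn (f := τ)
      (s := Finset.Icc 2 (2 * B.toNat + 4)) (t := Finset.Icc (-B) B)
      (by
        intro j hj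
        simp only [Finset.mem_coe, Finset.mem_Icc] at hj ⊢
        have := hbound j hj.1
        exact abs_le.mp this)
      (by
        intro j hj k hk hjk
        simp only [Finset.coe_Icc, Set.mem_Icc] at hj hk
        by_contra hne
        rcases lt_or_gt_of_ne hne with h | h
        · exact hinj j k hj.1 h hjk
        · exact hinj k j hk.1 h hjk.symm)
    rw [Nat.card_Icc, Int.card_Icc] at hcard
    omega
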